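/- Let G be a finite group and H, K ≤ G almost conjugate subgroups. Then for every subgroup L ≤ G, the double coset spaces H\G/L and K\G/L have the same cardinality. -/

import Mathlib

def AlmostConjugate {G : Type*} [Group G] (H K : Subgroup G) : Prop :=
  ∃ f : H ≃ K, ∀ h : H, IsConj (h : G) ((f h : K) : G)

open MulAction

/-- The double coset space `H\G/L` is the orbit space of `H` acting on `G⧸L`. -/
noncomputable def dosetEquivOrbits {G : Type*} [Group G] (H L : Subgroup G) :
    DoubleCoset.Quotient (H : Set G) (L : Set G) ≃ Quotient (orbitRel H (G ⧸ L)) := by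
  refine Equiv.ofBijective
    (Quotient.map' (fun g => (g : G ⧸ L)) ?_) ⟨?_, ?_⟩
  · rintro x y h
    rw [DoubleCoset.rel_iff] at h
    obtain ⟨a, ha, b, hb, rfl⟩ := h
    refine ⟨(⟨a, ha⟩ : H)⁻¹, ?_⟩
    show ((a⁻¹ * (a * x * b) : G) : G ⧸ L) = ((x : G) : G ⧸ L)
    rw [QuotientGroup.eq]
    have he : (a⁻¹ * (a * x * b))⁻¹ * x = b⁻¹ := by group
    rw [he]
    exact L.inv_mem hb
  · rintro ⟨x⟩ ⟨y⟩ h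
    have h' : (orbitRel H (G ⧸ L)) ((x : G) : G ⧸ L) ((y : G) : G ⧸ L) :=
      Quotient.exact' h
    obtain ⟨⟨a, ha⟩, hxy⟩ := h'
    have hx : ((a * y : G) : G ⧸ L) = ((x : G) : G ⧸ L) := hxy
    rw [QuotientGroup.eq] at hx
    apply Quotient.sound'
    rw [DoubleCoset.rel_iff]
    exact ⟨a⁻¹, H.inv_mem ha, ((a * y)⁻¹ * x)⁻¹, L.inv_mem hx, by group⟩
  · rintro ⟨⟨y⟩⟩
    exact ⟨DoubleCoset.mk H L y, rfl⟩

theorem card_fixedBy_eq_of_isConj {G : Type*} [Group G] (L : Subgroup G) {x y : G}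
    (h : IsConj x y) :
    Nat.card (fixedBy (G ⧸ L) x) = Nat.card (fixedBy (G ⧸ L) y) := by
  obtain ⟨c, hc⟩ := h
  refine Nat.card_congr (Equiv.subtypeEquiv (MulAction.toPerm (c : G)) fun q => ?_)
  show x • q = q ↔ y • (c : G) • q = (c : G) • q
  rw [smul_smul, ← hc, mul_smul]
  exact (smul_left_cancel_iff _).symm

theorem burnside_doset {G : Type*} [Group G] [Finite G] (H L : Subgroup G) [Fintype H] :
    Nat.card (DoubleCoset.Quotient (H : Set G) (L : Set G)) * Nat.card H
      = ∑ h : H, Nat.card (fixedBy (G ⧸ L) (h : G)) := by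
  classical
  letI : Fintype (G ⧸ L) := Fintype.ofFinite _
  letI : ∀ a : H, Fintype (fixedBy (G ⧸ L) a) := fun _ => Fintype.ofFinite _
  letI : Fintype (Quotient (orbitRel H (G ⧸ L))) := Fintype.ofFinite _
  have := MulAction.sum_card_fixedBy_eq_card_orbits_mul_card_group H (G ⧸ L)
  rw [Nat.card_congr (dosetEquivOrbits H L), Nat.card_eq_fintype_card,
    Nat.card_eq_fintype_card, ← this]
  refine Finset.sum_congr rfl fun h _ => ?_
  rw [Nat.card_eq_fintype_card]
  exact Fintype.card_congr (Equiv.refl _)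

/-- Almost conjugate subgroups H, K of a finite group G give, for every subgroup L,
double coset spaces H\G/L and K\G/L of the same cardinality. -/
theorem card_doubleCosets_eq_of_almostConjugate
    {G : Type*} [Group G] [Finite G] (H K : Subgroup G) (hHK : AlmostConjugate H K)
    (L : Subgroup G) :
    Nat.card (DoubleCoset.Quotient (H : Set G) (L : Set G))
      = Nat.card (DoubleCoset.Quotient (K : Set G) (L : Set G)) := by
  classical
  obtain ⟨f, hf⟩ := hHK
  letI : Fintype H := Fintype.ofFinite H
  letI : Fintype K := Fintype.ofFinite K
  have hcard : Nat.card H = Nat.card K := Nat.card_congr f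
  have h1 := burnside_doset H L
  have h2 := burnside_doset K L
  have hsum : ∑ h : H, Nat.card (fixedBy (G ⧸ L) (h : G))
      = ∑ k : K, Nat.card (fixedBy (G ⧸ L) (k : G)) := by
    rw [← Equiv.sum_comp f (fun k : K => Nat.card (fixedBy (G ⧸ L) (k : G)))]
    exact Finset.sum_congr rfl fun h _ => card_fixedBy_eq_of_isConj L (hf h)
  have hpos : 0 < Nat.card H := Nat.card_pos
  have key : Nat.card (DoubleCoset.Quotient (H : Set G) (L : Set G)) * Nat.card H
      = Nat.card (DoubleCoset.Quotient (K : Set G) (L : Set G)) * Nat.card H := by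
    rw [h1, hsum, ← h2, hcard]
  exact Nat.eq_of_mul_eq_mul_right hpos key
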